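/- arXiv:1512.05261 — 3 statements merged into one kernel-verified Lean document; each statement's English description precedes it below -/
import Mathlib

section
/- Let r, s ≥ 2 be integers. Then: (i) for N = ⌈log_{3/2}(r + s − 1)⌉, every 2-coloring of the 2-chains of the Boolean lattice B_N contains an r-cup in color 1 or an s-cap in color 2; and (ii) for every integer n with 2^n < ⌊(√(1 + 8(r−1)(s−1)) − 1)/2⌋ + r + s, there exists a 2-coloring of the 2-chains of B_n containing no r-cup in color 1 and no s-cap in color 2. (That is, log_2(⌊(√(1+8(r−1)(s−1))−1)/2⌋ + r + s) ≤ BR^2(∨_r, ∧_s) ≤ ⌈log_{3/2}(r + s − 1)⌉.) -/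
/-- An `r`-cup in color `i` for a coloring `c` of the 2-chains of a poset `Q`. -/
def IsCup {Q : Type*} [Preorder Q] {κ : Type*} (c : Q → Q → κ) (i : κ) (r : ℕ) : Prop :=
  ∃ (X : Q) (Y : Fin r → Q),
    Function.Injective Y ∧ ∀ k, X < Y k ∧ c X (Y k) = i

/-- An `s`-cap in color `i` for a coloring `c` of the 2-chains of a poset `Q`. -/
def IsCap {Q : Type*} [Preorder Q] {κ : Type*} (c : Q → Q → κ) (i : κ) (s : ℕ) : Prop :=
  ∃ (Y : Q) (X : Fin s → Q),
    Function.Injective X ∧ ∀ k, X k < Y ∧ c (X k) Y = i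


section BRhelpers
open Finset

lemma keynum (a b m x : ℕ) (hm : m*(m+1) ≤ 2*(a*b)) (hx : x ≤ m + a) (hxpos : 1 ≤ x) :
    x*(x-1)/2 + (m+a+1-x)*x ≤ a*b + a*x := by
  have h2 : (x*(x-1)/2)*2 = x*(x-1) := by
    have : Even (x*(x-1)) := by
      rcases Nat.even_or_odd x with he|ho
      · exact he.mul_right _
      · exact (Nat.Odd.sub_odd ho odd_one).mul_left _
    exact Nat.div_mul_cancel this.two_dvd
  have key : x*(x-1) + 2*((m+a+1-x)*x) ≤ 2*(a*b) + 2*(a*x) := by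
    zify [hxpos, (by omega : x ≤ m+a+1)]
    zify at hm
    nlinarith [sq_nonneg ((m:ℤ) - x), sq_nonneg ((m:ℤ) - x + 1)]
  omega

lemma sumbound (a b m T k : ℕ) (hm : m*(m+1) ≤ 2*(a*b)) (hT : T = m+a+b+1) :
    ∑ v ∈ range T, (min k v - b) ≤ a * k := by
  set k' := min k (T-1) with hk'
  have hterm : ∀ v ∈ range T, min k v - b = min k' v - b := by
    intro v hv
    simp only [mem_range] at hv
    have hv' : v ≤ T - 1 := by omega
    rcases le_total k (T-1) with h|h
    · rw [hk', min_eq_left h]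
    · rw [hk', min_eq_right h, min_eq_right (le_trans hv' h), min_eq_right hv']
  rw [Finset.sum_congr rfl hterm]
  rcases le_or_gt k' b with hkb | hkb
  · calc ∑ v ∈ range T, (min k' v - b) ≤ ∑ _v ∈ range T, 0 := by
          apply Finset.sum_le_sum; intro v _
          have := min_le_left k' v; omega
       _ = 0 := by simp
       _ ≤ a * k := Nat.zero_le _
  · set x := k' - b with hx
    have hxpos : 1 ≤ x := by omega
    have hxm : x ≤ m + a := by
      have : k' ≤ T - 1 := min_le_right _ _
      omega
    have hsplit : T = (b + x) + (m + a + 1 - x) := by omega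
    have hstep : ∑ v ∈ range T, (min k' v - b) ≤ x*(x-1)/2 + (m+a+1-x)*x := by
      rw [hsplit, Finset.sum_range_add]
      have h1 : ∑ v ∈ range (b+x), (min k' v - b) ≤ x*(x-1)/2 := by
        calc ∑ v ∈ range (b+x), (min k' v - b) ≤ ∑ v ∈ range (b+x), (v - b) := by
              apply Finset.sum_le_sum; intro v _
              have := min_le_right k' v; omega
          _ = ∑ i ∈ range x, i := by
              rw [Finset.sum_range_add]
              have e1 : ∑ v ∈ range b, (v - b) = 0 := by
                apply Finset.sum_eq_zero; intro v hv; simp only [mem_range] at hv; omega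
              have e2 : ∀ i ∈ range x, (b + i) - b = i := by intro i _; omega
              rw [e1, Finset.sum_congr rfl e2, zero_add]
          _ = x*(x-1)/2 := by
              have := Finset.sum_range_id_mul_two x
              omega
      have h2 : ∑ i ∈ range (m+a+1-x), (min k' (b+x+i) - b) ≤ (m+a+1-x)*x := by
        calc ∑ i ∈ range (m+a+1-x), (min k' (b+x+i) - b)
            ≤ ∑ _i ∈ range (m+a+1-x), x := by
              apply Finset.sum_le_sum; intro i _
              have := min_le_left k' (b+x+i); omega
          _ = (m+a+1-x)*x := by simp [mul_comm]
      omega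
    have hfin := keynum a b m x hm hxm hxpos
    have hlast : a*b + a*x ≤ a * k := by
      have hk'le : k' ≤ k := min_le_left _ _
      have he : a * k' = a*b + a*x := by
        have : k' = b + x := by omega
        rw [this, Nat.mul_add]
      calc a*b+a*x = a*k' := he.symm
        _ ≤ a*k := Nat.mul_le_mul_left _ hk'le
    omega


lemma exists_chi (a b m T : ℕ) (ha : 1 ≤ a) (hb : 1 ≤ b)
    (hm : m*(m+1) ≤ 2*(a*b)) (hT : T = m+a+b+1) :
    ∃ χ : Fin T → Fin T → Fin 2,
      (∀ u, ((univ : Finset (Fin T)).filter (fun v => u < v ∧ χ u v = 0)).card ≤ a) ∧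
      (∀ v, ((univ : Finset (Fin T)).filter (fun u => u < v ∧ χ u v = 1)).card ≤ b) := by
  classical
  set P := {p : Fin T × Fin T // p.1 < p.2}
  set B := (Fin T × Fin a) ⊕ (Fin T × Fin b)
  set t : P → Finset B := fun p =>
    (({p.1.1} ×ˢ (univ : Finset (Fin a))).image Sum.inl) ∪
    (({p.1.2} ×ˢ (univ : Finset (Fin b))).image Sum.inr) with ht
  have hall : ∀ s : Finset P, s.card ≤ (s.biUnion t).card := by
    intro s
    set K₁ := s.image (fun p : P => p.1.1) with hK₁
    set K₂ := s.image (fun p : P => p.1.2) with hK₂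
    have hbu : s.biUnion t =
        ((K₁ ×ˢ (univ : Finset (Fin a))).image Sum.inl) ∪
        ((K₂ ×ˢ (univ : Finset (Fin b))).image Sum.inr) := by
      ext x
      rcases x with ⟨u,i⟩ | ⟨v,j⟩ <;>
        simp [ht, hK₁, hK₂, Finset.mem_biUnion, Finset.mem_image]
    have hcard : (s.biUnion t).card = a * K₁.card + b * K₂.card := by
      rw [hbu, Finset.card_union_of_disjoint, Finset.card_image_of_injective _ Sum.inl_injective,
        Finset.card_image_of_injective _ Sum.inr_injective, Finset.card_product,
        Finset.card_product]
      · simp [Finset.card_univ, mul_comm]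
      · simp [Finset.disjoint_left]
    rw [hcard]
    have hfib : s.card = ∑ v ∈ K₂, (s.filter (fun p : P => p.1.2 = v)).card :=
      Finset.card_eq_sum_card_fiberwise (fun p hp => Finset.mem_image_of_mem _ hp)
    have hfible : ∀ v ∈ K₂, (s.filter (fun p : P => p.1.2 = v)).card ≤ min K₁.card (v : ℕ) := by
      intro v _
      apply le_min
      · apply Finset.card_le_card_of_injOn (fun p : P => p.1.1)
        · intro p hp
          simp only [Finset.mem_coe, Finset.mem_filter] at hp
          exact Finset.mem_image_of_mem _ hp.1
        · intro p hp q hq hpq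
          simp only [Finset.coe_filter, Set.mem_setOf_eq] at hp hq
          exact Subtype.ext (Prod.ext hpq (hp.2.trans hq.2.symm))
      · rw [← Fin.card_Iio v]
        apply Finset.card_le_card_of_injOn (fun p : P => p.1.1)
        · intro p hp
          simp only [Finset.mem_coe, Finset.mem_filter] at hp
          rw [Finset.mem_coe, Finset.mem_Iio, ← hp.2]
          exact p.2
        · intro p hp q hq hpq
          simp only [Finset.coe_filter, Set.mem_setOf_eq] at hp hq
          exact Subtype.ext (Prod.ext hpq (hp.2.trans hq.2.symm))
    have hsum : ∑ v ∈ K₂, min K₁.card (v : ℕ) ≤ b * K₂.card + a * K₁.card := by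
      calc ∑ v ∈ K₂, min K₁.card (v : ℕ)
          ≤ ∑ v ∈ K₂, (b + (min K₁.card (v : ℕ) - b)) := by
            apply Finset.sum_le_sum; intro v _; omega
        _ = b * K₂.card + ∑ v ∈ K₂, (min K₁.card (v : ℕ) - b) := by
            rw [Finset.sum_add_distrib, Finset.sum_const, smul_eq_mul, mul_comm]
        _ ≤ b * K₂.card + ∑ v ∈ (univ : Finset (Fin T)), (min K₁.card (v : ℕ) - b) := by
            exact Nat.add_le_add_left (Finset.sum_le_sum_of_subset (Finset.subset_univ _)) _
        _ ≤ b * K₂.card + a * K₁.card := by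
            gcongr
            rw [Fin.sum_univ_eq_sum_range (fun v => min K₁.card v - b) T]
            exact sumbound a b m T K₁.card hm hT
    calc s.card = ∑ v ∈ K₂, (s.filter (fun p : P => p.1.2 = v)).card := hfib
      _ ≤ ∑ v ∈ K₂, min K₁.card (v : ℕ) := Finset.sum_le_sum hfible
      _ ≤ b * K₂.card + a * K₁.card := hsum
      _ = a * K₁.card + b * K₂.card := by ring
  obtain ⟨f, hfinj, hft⟩ := (Finset.all_card_le_biUnion_card_iff_exists_injective t).mp hall
  refine ⟨fun u v => if h : u < v then ((f ⟨(u,v), h⟩).elim (fun _ => 0) (fun _ => 1)) else 1,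
    fun u => ?_, fun v => ?_⟩
  · -- zeros out of u
    refine le_trans (Finset.card_le_card_of_injOn (t := (univ : Finset (Fin a))) (fun v : Fin T =>
      if h : u < v then ((f ⟨(u,v), h⟩).elim (fun x => x.2) (fun _ => (⟨0, ha⟩ : Fin a))) else ⟨0, ha⟩)
      ?_ ?_) (by simp)
    · intro v _
      exact Finset.mem_univ _
    · intro v hv w hw hvw
      simp only [Finset.coe_filter, Set.mem_setOf_eq, Finset.mem_univ, true_and] at hv hw
      obtain ⟨hv1, hv2⟩ := hv
      obtain ⟨hw1, hw2⟩ := hw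
      rw [dif_pos hv1] at hv2
      rw [dif_pos hw1] at hw2
      simp only [dif_pos hv1, dif_pos hw1] at hvw
      -- f must be inl in both cases
      rcases hfv : f ⟨(u,v), hv1⟩ with x | x
      swap
      · rw [hfv] at hv2; simp at hv2
      rcases hfw : f ⟨(u,w), hw1⟩ with y | y
      swap
      · rw [hfw] at hw2; simp at hw2
      -- first components are u
      have hx1 : x.1 = u := by
        have := hft ⟨(u,v), hv1⟩
        rw [hfv, ht] at this
        simp at this
        obtain ⟨i, hi⟩ := this
        have := congrArg (fun z => match z with | Sum.inl (w,_) => w | Sum.inr (w,_) => w) hi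
        simpa using this.symm
      have hy1 : y.1 = u := by
        have := hft ⟨(u,w), hw1⟩
        rw [hfw, ht] at this
        simp at this
        obtain ⟨i, hi⟩ := this
        have := congrArg (fun z => match z with | Sum.inl (w,_) => w | Sum.inr (w,_) => w) hi
        simpa using this.symm
      rw [hfv, hfw] at hvw
      simp only [Sum.elim_inl] at hvw
      have : f ⟨(u,v), hv1⟩ = f ⟨(u,w), hw1⟩ := by
        rw [hfv, hfw]
        congr 1
        exact Prod.ext (hx1.trans hy1.symm) hvw
      have := hfinj this
      simpa using congrArg (fun p : P => p.1.2) this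
  · -- ones into v
    refine le_trans (Finset.card_le_card_of_injOn (t := (univ : Finset (Fin b))) (fun u : Fin T =>
      if h : u < v then ((f ⟨(u,v), h⟩).elim (fun _ => (⟨0, hb⟩ : Fin b)) (fun x => x.2)) else ⟨0, hb⟩)
      ?_ ?_) (by simp)
    · intro u _
      exact Finset.mem_univ _
    · intro u hu w hw huw
      simp only [Finset.coe_filter, Set.mem_setOf_eq, Finset.mem_univ, true_and] at hu hw
      obtain ⟨hu1, hu2⟩ := hu
      obtain ⟨hw1, hw2⟩ := hw
      rw [dif_pos hu1] at hu2
      rw [dif_pos hw1] at hw2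
      simp only [dif_pos hu1, dif_pos hw1] at huw
      rcases hfu : f ⟨(u,v), hu1⟩ with x | x
      · rw [hfu] at hu2; simp at hu2
      rcases hfw : f ⟨(w,v), hw1⟩ with y | y
      · rw [hfw] at hw2; simp at hw2
      have hx1 : x.1 = v := by
        have := hft ⟨(u,v), hu1⟩
        rw [hfu, ht] at this
        simp at this
        obtain ⟨i, hi⟩ := this
        have := congrArg (fun z => match z with | Sum.inl (w,_) => w | Sum.inr (w,_) => w) hi
        simpa using this.symm
      have hy1 : y.1 = v := by
        have := hft ⟨(w,v), hw1⟩
        rw [hfw, ht] at this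
        simp at this
        obtain ⟨i, hi⟩ := this
        have := congrArg (fun z => match z with | Sum.inl (w,_) => w | Sum.inr (w,_) => w) hi
        simpa using this.symm
      rw [hfu, hfw] at huw
      simp only [Sum.elim_inr] at huw
      have : f ⟨(u,v), hu1⟩ = f ⟨(w,v), hw1⟩ := by
        rw [hfu, hfw]
        congr 1
        exact Prod.ext (hx1.trans hy1.symm) huw
      have := hfinj this
      simpa using congrArg (fun p : P => p.1.1) this

section emb
variable {n : ℕ}

def keyF (A : Finset (Fin n)) : ℕ :=
  ((finFunctionFinEquiv (fun i => if i ∈ A then 1 else 0) : Fin (2^n)) : ℕ) + 2^n * A.card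

lemma keyF_mono {A B : Finset (Fin n)} (h : A ⊂ B) : keyF A < keyF B := by
  have hcard : A.card < B.card := Finset.card_lt_card h
  have hvA : ((finFunctionFinEquiv (fun i => if i ∈ A then 1 else 0) : Fin (2^n)) : ℕ) < 2^n :=
    (finFunctionFinEquiv _).isLt
  calc keyF A < 2^n + 2^n * A.card := by unfold keyF; omega
    _ = 2^n * (A.card + 1) := by ring
    _ ≤ 2^n * B.card := Nat.mul_le_mul_left _ (by omega)
    _ ≤ keyF B := Nat.le_add_left _ _

lemma keyF_inj : Function.Injective (keyF (n := n)) := by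
  intro A B h
  have hvA := (finFunctionFinEquiv (fun i => if i ∈ A then (1:Fin 2) else 0)).isLt
  have hvB := (finFunctionFinEquiv (fun i => if i ∈ B then (1:Fin 2) else 0)).isLt
  unfold keyF at h
  have hval : ((finFunctionFinEquiv (fun i => if i ∈ A then (1:Fin 2) else 0) : Fin (2^n)) : ℕ)
      = ((finFunctionFinEquiv (fun i => if i ∈ B then (1:Fin 2) else 0) : Fin (2^n)) : ℕ) := by
    rcases lt_trichotomy A.card B.card with hc | hc | hc
    · exfalso
      have h2 : 2^n * (A.card+1) ≤ 2^n * B.card := Nat.mul_le_mul_left _ (by omega)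
      rw [Nat.mul_add, Nat.mul_one] at h2
      omega
    · rw [hc] at h; omega
    · exfalso
      have h2 : 2^n * (B.card+1) ≤ 2^n * A.card := Nat.mul_le_mul_left _ (by omega)
      rw [Nat.mul_add, Nat.mul_one] at h2
      omega
  have : (fun i => if i ∈ A then (1:Fin 2) else 0) = (fun i => if i ∈ B then (1:Fin 2) else 0) :=
    finFunctionFinEquiv.injective (Fin.ext hval)
  ext i
  have := congrFun this i
  by_cases hiA : i ∈ A <;> by_cases hiB : i ∈ B <;> simp [hiA, hiB] at this ⊢
end emb

section part2
variable {n T : ℕ}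

noncomputable def rankF (A : Finset (Fin n)) : ℕ :=
  (univ.filter (fun B : Finset (Fin n) => keyF B < keyF A)).card

lemma rankF_lt : ∀ A : Finset (Fin n), rankF A < 2^n := by
  intro A
  have h1 : (univ.filter (fun B : Finset (Fin n) => keyF B < keyF A)) ⊆ univ.erase A := by
    intro C hC
    simp only [Finset.mem_filter] at hC
    apply Finset.mem_erase.mpr
    exact ⟨fun hCA => by simp [hCA] at hC, Finset.mem_univ _⟩
  have h2 := Finset.card_le_card h1
  have h3 : (univ : Finset (Finset (Fin n))).card = 2^n := by
    rw [Finset.card_univ, Fintype.card_finset, Fintype.card_fin]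
  have h4 := Finset.card_erase_le (s := (univ : Finset (Finset (Fin n)))) (a := A)
  have h5 : 0 < 2^n := Nat.pow_pos (by norm_num)
  have := Finset.card_erase_of_mem (Finset.mem_univ A)
  unfold rankF
  omega

lemma rankF_mono {A B : Finset (Fin n)} (h : keyF A < keyF B) : rankF A < rankF B := by
  unfold rankF
  apply Finset.card_lt_card
  constructor
  · intro C hC
    simp only [Finset.mem_filter] at hC ⊢
    exact ⟨hC.1, hC.2.trans h⟩
  · intro hsub
    have : A ∈ univ.filter (fun C => keyF C < keyF B) := by
      simp only [Finset.mem_filter]; exact ⟨Finset.mem_univ _, h⟩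
    have := hsub this
    simp only [Finset.mem_filter] at this
    omega

lemma partii (r s n : ℕ) (hr : 2 ≤ r) (hs : 2 ≤ s)
    (hyp : (2 : ℤ) ^ n <
      ⌊(Real.sqrt (1 + 8 * ((r : ℝ) - 1) * ((s : ℝ) - 1)) - 1) / 2⌋ + r + s) :
    ∃ c : Finset (Fin n) → Finset (Fin n) → Fin 2,
      ¬ IsCup c 0 r ∧ ¬ IsCap c 1 s := by
  classical
  set a := r - 1 with hadef
  set b := s - 1 with hbdef
  have ha : 1 ≤ a := by omega
  have hb : 1 ≤ b := by omega
  set X : ℝ := 1 + 8 * ((r : ℝ) - 1) * ((s : ℝ) - 1) with hX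
  have hX1 : (1:ℝ) ≤ X := by
    have : (0:ℝ) ≤ ((r:ℝ)-1) := by
      have : (1:ℝ) ≤ (r:ℝ) := by exact_mod_cast (by omega : 1 ≤ r)
      linarith
    have h2 : (0:ℝ) ≤ ((s:ℝ)-1) := by
      have : (1:ℝ) ≤ (s:ℝ) := by exact_mod_cast (by omega : 1 ≤ s)
      linarith
    nlinarith
  set M : ℤ := ⌊(Real.sqrt X - 1) / 2⌋ with hM
  have hM0 : 0 ≤ M := by
    apply Int.le_floor.mpr
    have : (1:ℝ) ≤ Real.sqrt X := by
      rw [show (1:ℝ) = Real.sqrt 1 by simp]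
      exact Real.sqrt_le_sqrt hX1
    push_cast
    linarith
  set m : ℕ := M.toNat with hm'
  have hmM : (m : ℤ) = M := Int.toNat_of_nonneg hM0
  have hmkey : m * (m+1) ≤ 2 * (a * b) := by
    have hfl : (M : ℝ) ≤ (Real.sqrt X - 1) / 2 := Int.floor_le _
    have h2M : (2*(M:ℝ)+1) ≤ Real.sqrt X := by linarith
    have h2M0 : (0:ℝ) ≤ 2*(M:ℝ)+1 := by
      have : (0:ℝ) ≤ (M:ℝ) := by exact_mod_cast hM0
      linarith
    have hXpos : (0:ℝ) ≤ X := by linarith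
    have hsq : (2*(M:ℝ)+1)^2 ≤ X := (Real.le_sqrt h2M0 hXpos).mp h2M
    have hr1 : ((a:ℝ)) = (r:ℝ) - 1 := by
      have : (1:ℝ) ≤ (r:ℝ) := by exact_mod_cast (by omega : 1 ≤ r)
      rw [hadef]; push_cast [Nat.cast_sub (by omega : 1 ≤ r)]; ring
    have hs1 : ((b:ℝ)) = (s:ℝ) - 1 := by
      rw [hbdef]; push_cast [Nat.cast_sub (by omega : 1 ≤ s)]; ring
    have : ((m:ℝ)) * ((m:ℝ)+1) ≤ 2 * ((a:ℝ) * (b:ℝ)) := by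
      have hmr : ((m:ℝ)) = (M:ℝ) := by exact_mod_cast hmM
      rw [hmr, hr1, hs1, hX] at *
      nlinarith
    exact_mod_cast this
  set T : ℕ := m + a + b + 1 with hT
  have hTle : 2^n ≤ T := by
    have : (2:ℤ)^n ≤ M + r + s - 1 := by omega
    have h2 : (2:ℤ)^n ≤ (m:ℤ) + a + b + 1 := by
      rw [hmM]
      have : ((a:ℤ)) = (r:ℤ) - 1 := by rw [hadef]; push_cast [Nat.cast_sub (by omega : 1 ≤ r)]; ring
      have h3 : ((b:ℤ)) = (s:ℤ) - 1 := by rw [hbdef]; push_cast [Nat.cast_sub (by omega : 1 ≤ s)]; ring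
      push_cast at *
      omega
    exact_mod_cast h2
  obtain ⟨χ, hχ0, hχ1⟩ := exists_chi a b m T ha hb hmkey rfl
  have hrank : ∀ A : Finset (Fin n), rankF A < T := fun A => lt_of_lt_of_le (rankF_lt A) hTle
  set ℓ : Finset (Fin n) → Fin T := fun A => ⟨rankF A, hrank A⟩ with hℓ
  have ℓmono : ∀ {A B : Finset (Fin n)}, A < B → ℓ A < ℓ B := by
    intro A B hAB
    have : A ⊂ B := hAB
    exact rankF_mono (keyF_mono this)
  have ℓinj : Function.Injective ℓ := by
    intro A B h
    by_contra hne
    rcases lt_trichotomy (keyF A) (keyF B) with hk | hk | hk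
    · have := rankF_mono hk
      simp only [hℓ, Fin.mk.injEq] at h
      omega
    · exact hne (keyF_inj hk)
    · have := rankF_mono hk
      simp only [hℓ, Fin.mk.injEq] at h
      omega
  refine ⟨fun A B => χ (ℓ A) (ℓ B), ?_, ?_⟩
  · rintro ⟨Xc, Y, Yinj, hY⟩
    have hcard : (univ : Finset (Fin r)).card ≤
        ((univ : Finset (Fin T)).filter (fun v => ℓ Xc < v ∧ χ (ℓ Xc) v = 0)).card := by
      apply Finset.card_le_card_of_injOn (fun k => ℓ (Y k))
      · intro k _
        simp only [Finset.mem_coe, Finset.mem_filter, Finset.mem_univ, true_and]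
        exact ⟨ℓmono (hY k).1, (hY k).2⟩
      · intro k _ k' _ hkk'
        exact Yinj (ℓinj hkk')
    have := hχ0 (ℓ Xc)
    simp only [Finset.card_univ, Fintype.card_fin] at hcard
    omega
  · rintro ⟨Yc, Xf, Xinj, hX2⟩
    have hcard : (univ : Finset (Fin s)).card ≤
        ((univ : Finset (Fin T)).filter (fun u => u < ℓ Yc ∧ χ u (ℓ Yc) = 1)).card := by
      apply Finset.card_le_card_of_injOn (fun k => ℓ (Xf k))
      · intro k _
        simp only [Finset.mem_coe, Finset.mem_filter, Finset.mem_univ, true_and]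
        exact ⟨ℓmono (hX2 k).1, (hX2 k).2⟩
      · intro k _ k' _ hkk'
        exact Xinj (ℓinj hkk')
    have := hχ1 (ℓ Yc)
    simp only [Finset.card_univ, Fintype.card_fin] at hcard
    omega
end part2

lemma parti (r s N : ℕ) (hr : 2 ≤ r) (hs : 2 ≤ s)
    (hN : (N : ℤ) = ⌈Real.logb (3 / 2) ((r : ℝ) + (s : ℝ) - 1)⌉)
    (c : Finset (Fin N) → Finset (Fin N) → Fin 2) :
    IsCup c 0 r ∨ IsCap c 1 s := by
  classical
  -- numeric facts
  set x : ℝ := (r : ℝ) + (s : ℝ) - 1 with hx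
  have hx3 : (3:ℝ) ≤ x := by
    have h1 : (2:ℝ) ≤ (r:ℝ) := by exact_mod_cast hr
    have h2 : (2:ℝ) ≤ (s:ℝ) := by exact_mod_cast hs
    simp only [hx]; linarith
  have hlogpos : 0 < Real.logb (3/2) x := Real.logb_pos (by norm_num) (by linarith)
  have hN1 : 1 ≤ N := by
    have : (0:ℤ) < ⌈Real.logb (3/2) x⌉ := Int.ceil_pos.mpr hlogpos
    omega
  have hpow : x ≤ ((3:ℝ)/2)^N := by
    have h1' := Int.le_ceil (Real.logb (3/2) x)
    rw [← hN] at h1'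
    have h1 : Real.logb (3/2) x ≤ (N : ℝ) := by exact_mod_cast h1'
    have h2 : ((3:ℝ)/2) ^ (Real.logb (3/2) x) ≤ ((3:ℝ)/2) ^ ((N:ℝ)) :=
      (Real.rpow_le_rpow_left_iff (by norm_num)).mpr h1
    rw [Real.rpow_logb (by norm_num) (by norm_num) (by linarith), Real.rpow_natCast] at h2
    exact h2
  have hnumR : x * 2^N ≤ 3^N := by
    have h1 : ((3:ℝ)/2)^N * 2^N = 3^N := by
      rw [div_pow]
      field_simp
    have h2 : (0:ℝ) < 2^N := by positivity
    nlinarith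
  have hnum : (r + s - 1) * 2^N < 3^N := by
    have hle : (r + s - 1) * 2^N ≤ 3^N := by
      have hcast : ((r + s - 1 : ℕ) : ℝ) = x := by
        push_cast [Nat.cast_sub (by omega : 1 ≤ r + s)]
        simp [hx]
      have hR : ((r+s-1:ℕ):ℝ) * (2:ℝ)^N ≤ (3:ℝ)^N := by rw [hcast]; exact hnumR
      exact_mod_cast hR
    rcases lt_or_eq_of_le hle with h | h
    · exact h
    · exfalso
      have hodd : 3^N % 2 = 1 := by
        rw [Nat.pow_mod]; simp
      have hdvd : 2 ∣ (r + s - 1) * 2^N := Dvd.dvd.mul_left (dvd_pow_self 2 (by omega : N ≠ 0)) _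
      omega
  -- main argument
  by_contra hcon
  rw [not_or] at hcon
  obtain ⟨hcup, hcap⟩ := hcon
  have hfin2 : ∀ z : Fin 2, z = 0 ∨ z = 1 := by decide
  -- bound on up-degrees
  have hup : ∀ A : Finset (Fin N),
      ((univ : Finset (Finset (Fin N))).filter (fun B => A ⊂ B ∧ c A B = 0)).card ≤ r - 1 := by
    intro A
    by_contra hgt
    push_neg at hgt
    have hge : r ≤ ((univ : Finset (Finset (Fin N))).filter (fun B => A ⊂ B ∧ c A B = 0)).card := by
      omega
    obtain ⟨t, hts, htc⟩ := Finset.exists_subset_card_eq hge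
    apply hcup
    set e := (t.equivFin.trans (finCongr htc)).symm with he
    refine ⟨A, fun k => (e k : Finset (Fin N)), ?_, ?_⟩
    · intro k k' hkk'
      exact e.injective (Subtype.ext hkk')
    · intro k
      have hmem : ((e k : Finset (Fin N))) ∈ t := (e k).2
      have := hts hmem
      simp only [Finset.mem_filter] at this
      exact ⟨this.2.1, this.2.2⟩
  have hdown : ∀ B : Finset (Fin N),
      ((univ : Finset (Finset (Fin N))).filter (fun A => A ⊂ B ∧ c A B = 1)).card ≤ s - 1 := by
    intro B
    by_contra hgt
    push_neg at hgt
    have hge : s ≤ ((univ : Finset (Finset (Fin N))).filter (fun A => A ⊂ B ∧ c A B = 1)).card := by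
      omega
    obtain ⟨t, hts, htc⟩ := Finset.exists_subset_card_eq hge
    apply hcap
    set e := (t.equivFin.trans (finCongr htc)).symm with he
    refine ⟨B, fun k => (e k : Finset (Fin N)), ?_, ?_⟩
    · intro k k' hkk'
      exact e.injective (Subtype.ext hkk')
    · intro k
      have hmem : ((e k : Finset (Fin N))) ∈ t := (e k).2
      have := hts hmem
      simp only [Finset.mem_filter] at this
      exact ⟨this.2.1, this.2.2⟩
  set Ω := (univ : Finset (Finset (Fin N) × Finset (Fin N))) with hΩ
  set C := Ω.filter (fun p => p.1 ⊂ p.2) with hC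
  set C0 := Ω.filter (fun p => p.1 ⊂ p.2 ∧ c p.1 p.2 = 0) with hC0
  set C1 := Ω.filter (fun p => p.1 ⊂ p.2 ∧ c p.1 p.2 = 1) with hC1
  have hCsplit : C.card = C0.card + C1.card := by
    rw [← Finset.card_union_of_disjoint]
    · congr 1
      ext p
      simp only [hC, hC0, hC1, Finset.mem_filter, Finset.mem_union]
      constructor
      · rintro ⟨h1, h2⟩
        rcases hfin2 (c p.1 p.2) with h | h
        · exact Or.inl ⟨h1, h2, h⟩
        · exact Or.inr ⟨h1, h2, h⟩
      · rintro (⟨h1, h2, _⟩ | ⟨h1, h2, _⟩) <;> exact ⟨h1, h2⟩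
    · rw [Finset.disjoint_left]
      rintro p hp hq
      simp only [hC0, hC1, Finset.mem_filter] at hp hq
      rw [hp.2.2] at hq
      exact absurd hq.2.2 (by decide)
  have hcard_univ : (univ : Finset (Finset (Fin N))).card = 2^N := by
    rw [Finset.card_univ, Fintype.card_finset, Fintype.card_fin]
  have hC0card : C0.card ≤ 2^N * (r-1) := by
    rw [Finset.card_eq_sum_card_fiberwise
      (f := fun p : Finset (Fin N) × Finset (Fin N) => p.1)
      (t := (univ : Finset (Finset (Fin N)))) (fun p _ => Finset.mem_univ _)]
    calc ∑ A ∈ univ, (C0.filter (fun p => p.1 = A)).card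
        ≤ ∑ A ∈ (univ : Finset (Finset (Fin N))), (r-1) := by
          apply Finset.sum_le_sum
          intro A _
          refine le_trans (Finset.card_le_card_of_injOn (fun p => p.2) ?_ ?_) (hup A)
          · intro p hp
            simp only [hC0, Finset.mem_coe, Finset.mem_filter] at hp ⊢
            rw [← hp.2]
            exact ⟨Finset.mem_univ _, hp.1.2.1, hp.1.2.2⟩
          · intro p hp q hq hpq
            simp only [Finset.coe_filter, Set.mem_setOf_eq] at hp hq
            exact Prod.ext (hp.2.trans hq.2.symm) hpq
      _ = 2^N * (r-1) := by rw [Finset.sum_const, smul_eq_mul, hcard_univ]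
  have hC1card : C1.card ≤ 2^N * (s-1) := by
    rw [Finset.card_eq_sum_card_fiberwise
      (f := fun p : Finset (Fin N) × Finset (Fin N) => p.2)
      (t := (univ : Finset (Finset (Fin N)))) (fun p _ => Finset.mem_univ _)]
    calc ∑ B ∈ univ, (C1.filter (fun p => p.2 = B)).card
        ≤ ∑ B ∈ (univ : Finset (Finset (Fin N))), (s-1) := by
          apply Finset.sum_le_sum
          intro B _
          refine le_trans (Finset.card_le_card_of_injOn (fun p => p.1) ?_ ?_) (hdown B)
          · intro p hp
            simp only [hC1, Finset.mem_coe, Finset.mem_filter] at hp ⊢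
            rw [← hp.2]
            exact ⟨Finset.mem_univ _, hp.1.2.1, hp.1.2.2⟩
          · intro p hp q hq hpq
            simp only [Finset.coe_filter, Set.mem_setOf_eq] at hp hq
            exact Prod.ext hpq (hp.2.trans hq.2.symm)
      _ = 2^N * (s-1) := by rw [Finset.sum_const, smul_eq_mul, hcard_univ]
  -- total count of 2-chains
  set D := Ω.filter (fun p => p.1 ⊆ p.2) with hD
  set Δ := Ω.filter (fun p => p.1 = p.2) with hΔ
  have hDcard : D.card = 3^N := by
    have : D.card = (univ : Finset (Fin N → Fin 3)).card := by
      apply Finset.card_bij'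
        (i := fun p _ => (fun j => if j ∈ p.1 then 0 else if j ∈ p.2 then 1 else 2))
        (j := fun f _ => (univ.filter (fun j => f j = 0), univ.filter (fun j => f j ≠ 2)))
      case hi => exact fun p _ => Finset.mem_univ _
      case hj =>
        intro f _
        simp only [hD, hΩ, Finset.mem_filter]
        refine ⟨Finset.mem_univ _, ?_⟩
        intro j hj
        simp only [Finset.mem_filter, Finset.mem_univ, true_and] at hj ⊢
        rw [hj]; decide
      case left_inv =>
        intro p hp
        simp only [hD, hΩ, Finset.mem_filter] at hp
        obtain ⟨-, hsub⟩ := hp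
        have h1 : univ.filter (fun j => (if j ∈ p.1 then (0:Fin 3) else if j ∈ p.2 then 1 else 2) = 0) = p.1 := by
          ext j
          simp only [Finset.mem_filter, Finset.mem_univ, true_and]
          by_cases h1 : j ∈ p.1
          · simp [h1]
          · by_cases h2 : j ∈ p.2 <;> simp [h1, h2]
        have h2 : univ.filter (fun j => (if j ∈ p.1 then (0:Fin 3) else if j ∈ p.2 then 1 else 2) ≠ 2) = p.2 := by
          ext j
          simp only [Finset.mem_filter, Finset.mem_univ, true_and]
          by_cases h1 : j ∈ p.1
          · simp [h1, hsub h1]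
          · by_cases h2 : j ∈ p.2 <;> simp [h1, h2]
        rw [Prod.ext_iff]
        exact ⟨h1, h2⟩
      case right_inv =>
        intro f _
        funext j
        have h3 : ∀ z : Fin 3, z = 0 ∨ z = 1 ∨ z = 2 := by decide
        rcases h3 (f j) with h | h | h <;> simp [h]
    rw [this, Finset.card_univ]
    simp
  have hΔcard : Δ.card = 2^N := by
    have : Δ = (univ : Finset (Finset (Fin N))).image (fun A => (A, A)) := by
      ext p
      simp only [hΔ, hΩ, Finset.mem_filter, Finset.mem_univ, true_and, Finset.mem_image]
      constructor
      · intro h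
        exact ⟨p.1, by rw [Prod.ext_iff]; exact ⟨rfl, h⟩⟩
      · rintro ⟨A, rfl⟩
        rfl
    rw [this, Finset.card_image_of_injective _ (fun A B h => (Prod.mk.injEq _ _ _ _).mp h |>.1),
      hcard_univ]
  have hDsplit : D.card = C.card + Δ.card := by
    rw [← Finset.card_union_of_disjoint]
    · congr 1
      ext p
      simp only [hD, hC, hΔ, Finset.mem_filter, Finset.mem_union]
      constructor
      · rintro ⟨h1, h2⟩
        rcases (Finset.le_iff_subset.mpr h2).lt_or_eq with h | h
        · exact Or.inl ⟨h1, h⟩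
        · exact Or.inr ⟨h1, h⟩
      · rintro (⟨h1, h2⟩ | ⟨h1, h2⟩)
        · exact ⟨h1, h2.subset⟩
        · exact ⟨h1, Finset.le_iff_subset.mp (le_of_eq h2)⟩
    · rw [Finset.disjoint_left]
      rintro p hp hq
      simp only [hC, hΔ, Finset.mem_filter] at hp hq
      exact absurd hq.2 hp.2.ne
  -- final contradiction
  obtain ⟨r', rfl⟩ : ∃ r', r = r' + 1 := ⟨r - 1, by omega⟩
  obtain ⟨s', rfl⟩ : ∃ s', s = s' + 1 := ⟨s - 1, by omega⟩
  simp only [Nat.add_sub_cancel] at hC0card hC1card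
  have hfin : (r' + 1 + (s' + 1) - 1) * 2^N = 2^N * r' + 2^N * s' + 2^N := by
    have h9 : r' + 1 + (s' + 1) - 1 = r' + s' + 1 := by omega
    rw [h9]; ring
  omega

end BRhelpers

/-- for `r, s ≥ 2`:
(i) for `N = ⌈log_{3/2}(r + s − 1)⌉`, every 2-coloring of the 2-chains of the
Boolean lattice `B_N` contains an `r`-cup in color `0` or an `s`-cap in color `1`;
(ii) for every `n` with `2^n < ⌊(√(1 + 8(r−1)(s−1)) − 1)/2⌋ + r + s`, some
2-coloring of the 2-chains of `B_n` has no `r`-cup in color `0` and no `s`-cap in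
color `1`.
(That is, `log₂(⌊(√(1+8(r−1)(s−1))−1)/2⌋ + r + s) ≤ BR^2(∨_r, ∧_s)
≤ ⌈log_{3/2}(r + s − 1)⌉`.) -/
theorem boolean_ramsey_cup_vs_cap
    (r s : ℕ) (hr : 2 ≤ r) (hs : 2 ≤ s) :
    (∀ N : ℕ, (N : ℤ) = ⌈Real.logb (3 / 2) ((r : ℝ) + (s : ℝ) - 1)⌉ →
      ∀ c : Finset (Fin N) → Finset (Fin N) → Fin 2,
        IsCup c 0 r ∨ IsCap c 1 s) ∧
    (∀ n : ℕ,
      (2 : ℤ) ^ n <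
        ⌊(Real.sqrt (1 + 8 * ((r : ℝ) - 1) * ((s : ℝ) - 1)) - 1) / 2⌋ + r + s →
      ∃ c : Finset (Fin n) → Finset (Fin n) → Fin 2,
        ¬ IsCup c 0 r ∧ ¬ IsCap c 1 s) := by
  constructor
  · intro N hN c
    exact parti r s N hr hs hN c
  · intro n hn
    exact partii r s n hr hs hn
end

section
/- For integers r, s ≥ 2 and N = 2·⌊(√(1 + 8(r−1)(s−1)) − 1)/2⌋ + 3(r + s) − 1, every 2-coloring of the 2-chains of the chain C_N contains an r-diamond in color 1 or an s-diamond in color 2. (That is, CR^2(⋄_r, ⋄_s) ≤ 2⌊(√(1+8(r−1)(s−1))−1)/2⌋ + 3(r+s) − 1.) -/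
/-- An `r`-diamond in color `i` for a coloring `c` of the 2-chains of a poset `Q`:
distinct elements `x, y 1, …, y r, z` with `x < y k < z`, `c x (y k) = i` and
`c (y k) z = i` for all `k` (the pair `(x, z)` may have any color). -/
def IsDiamond {Q : Type*} [Preorder Q] {κ : Type*} (c : Q → Q → κ) (i : κ) (r : ℕ) : Prop :=
  ∃ (x z : Q) (y : Fin r → Q),
    Function.Injective y ∧
    ∀ k, x < y k ∧ y k < z ∧ c x (y k) = i ∧ c (y k) z = i

open Finset

private lemma fin2_cases (a : Fin 2) : a = 0 ∨ a = 1 := by omega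

private lemma fin2_of_ne (a : Fin 2) (h : ¬ a = 0) : a = 1 := by omega

private lemma fin2_of_ne' (a : Fin 2) (h : ¬ a = 1) : a = 0 := by omega

private lemma diamond_of_subset {N : ℕ} (c : Fin N → Fin N → Fin 2) (i : Fin 2) (r : ℕ)
    (x z : Fin N) (S : Finset (Fin N)) (hcard : r ≤ S.card)
    (hS : ∀ y ∈ S, x < y ∧ y < z ∧ c x y = i ∧ c y z = i) :
    IsDiamond c i r := by
  obtain ⟨S', hsub, hcard'⟩ := Finset.exists_subset_card_eq hcard
  refine ⟨x, z, fun k => (S'.orderIsoOfFin hcard' k : Fin N), ?_, ?_⟩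
  · intro a b hab
    exact (S'.orderIsoOfFin hcard').injective (Subtype.coe_injective hab)
  · intro k
    exact hS _ (hsub (S'.orderIsoOfFin hcard' k).2)

private lemma count_key {N : ℕ} (T : Finset (Fin N)) (P : Fin N → Fin N → Prop)
    [DecidableRel P] (A B : ℕ)
    (hA : ∀ z ∈ T, (T.filter (fun y => y < z ∧ P y z)).card ≤ A)
    (hB : ∀ x ∈ T, (T.filter (fun y => x < y ∧ ¬ P x y)).card ≤ B) :
    ∑ k ∈ range T.card, k ≤ ∑ k ∈ range T.card, min A k + ∑ k ∈ range T.card, min B k := by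
  set t := T.card with ht
  let f : Fin t ↪o Fin N := T.orderEmbOfFin ht.symm
  have hfT : ∀ j, f j ∈ T := fun j => T.orderEmbOfFin_mem ht.symm j
  have hD : ∀ k : Fin t, (univ.filter (fun j => j < k ∧ P (f j) (f k))).card ≤ min A k.val := by
    intro k
    refine le_min ?_ ?_
    · calc (univ.filter (fun j => j < k ∧ P (f j) (f k))).card
          ≤ (T.filter (fun y => y < f k ∧ P y (f k))).card := by
            apply Finset.card_le_card_of_injOn f
            · intro j hj
              simp only [mem_coe, mem_filter, mem_univ, true_and] at hj ⊢
              exact ⟨hfT j, f.strictMono hj.1, hj.2⟩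
            · exact fun a _ b _ h => f.injective h
        _ ≤ A := hA (f k) (hfT k)
    · calc (univ.filter (fun j => j < k ∧ P (f j) (f k))).card
          ≤ (univ.filter (fun j => j < k)).card := by
            apply Finset.card_le_card
            intro j hj; simp only [mem_filter] at hj ⊢; exact ⟨hj.1, hj.2.1⟩
        _ = k.val := by rw [← Fin.card_Iio k]; congr 1; ext j; simp
  have hE : ∀ j : Fin t, (univ.filter (fun k => j < k ∧ ¬ P (f j) (f k))).card
      ≤ min B (t - 1 - j.val) := by
    intro j
    refine le_min ?_ ?_
    · calc (univ.filter (fun k => j < k ∧ ¬ P (f j) (f k))).card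
          ≤ (T.filter (fun y => f j < y ∧ ¬ P (f j) y)).card := by
            apply Finset.card_le_card_of_injOn f
            · intro k hk
              simp only [mem_coe, mem_filter, mem_univ, true_and] at hk ⊢
              exact ⟨hfT k, f.strictMono hk.1, hk.2⟩
            · exact fun a _ b _ h => f.injective h
        _ ≤ B := hB (f j) (hfT j)
    · calc (univ.filter (fun k => j < k ∧ ¬ P (f j) (f k))).card
          ≤ (univ.filter (fun k => j < k)).card := by
            apply Finset.card_le_card
            intro k hk; simp only [mem_filter] at hk ⊢; exact ⟨hk.1, hk.2.1⟩
        _ = t - 1 - j.val := by rw [← Fin.card_Ioi j]; congr 1; ext k; simp [Finset.mem_Ioi]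
  have hsplit : ∀ k : Fin t, k.val =
      (univ.filter (fun j => j < k ∧ P (f j) (f k))).card
      + (univ.filter (fun j => j < k ∧ ¬ P (f j) (f k))).card := by
    intro k
    have h1 : (univ.filter (fun j => j < k)).card = k.val := by
      rw [← Fin.card_Iio k]; congr 1; ext j; simp
    rw [← h1]
    rw [Finset.card_filter, Finset.card_filter, Finset.card_filter, ← Finset.sum_add_distrib]
    apply Finset.sum_congr rfl
    intro j _
    by_cases h : j < k <;> by_cases h' : P (f j) (f k) <;> simp [h, h']
  have hswap : ∑ k : Fin t, (univ.filter (fun j => j < k ∧ ¬ P (f j) (f k))).card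
      = ∑ j : Fin t, (univ.filter (fun k => j < k ∧ ¬ P (f j) (f k))).card := by
    simp only [Finset.card_filter]
    rw [Finset.sum_comm]
  calc ∑ k ∈ range t, k = ∑ k : Fin t, (k.val) := (Fin.sum_univ_eq_sum_range _ t).symm
    _ = ∑ k : Fin t, ((univ.filter (fun j => j < k ∧ P (f j) (f k))).card
        + (univ.filter (fun j => j < k ∧ ¬ P (f j) (f k))).card) := by
        exact Finset.sum_congr rfl fun k _ => hsplit k
    _ = ∑ k : Fin t, (univ.filter (fun j => j < k ∧ P (f j) (f k))).card
        + ∑ j : Fin t, (univ.filter (fun k => j < k ∧ ¬ P (f j) (f k))).card := by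
        rw [Finset.sum_add_distrib, hswap]
    _ ≤ ∑ k : Fin t, min A k.val + ∑ j : Fin t, min B (t - 1 - j.val) := by
        gcongr with k _ j _
        exacts [hD k, hE j]
    _ = ∑ k ∈ range t, min A k + ∑ k ∈ range t, min B k := by
        rw [Fin.sum_univ_eq_sum_range (fun k => min A k) t,
          Fin.sum_univ_eq_sum_range (fun k => min B (t-1-k)) t,
          Finset.sum_range_reflect (fun k => min B k) t]

private lemma sum_min_eq (A : ℕ) :
    ∀ t : ℕ, A ≤ t → (∑ k ∈ range t, min A k) * 2 + A*A + A = 2*A*t := by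
  refine Nat.le_induction ?_ ?_
  · have h1 : (∑ k ∈ range A, min A k) = ∑ k ∈ range A, k := by
      apply Finset.sum_congr rfl
      intro k hk
      rw [Finset.mem_range] at hk
      omega
    rw [h1, Finset.sum_range_id_mul_two]
    cases A with
    | zero => rfl
    | succ n => simp [Nat.succ_sub_one]; ring
  · intro t ht ih
    rw [Finset.sum_range_succ, Nat.add_mul, min_eq_left ht, Nat.mul_succ]
    linarith [ih]

private lemma arith_key (t A B : ℕ)
    (h : ∑ k ∈ range t, k ≤ ∑ k ∈ range t, min A k + ∑ k ∈ range t, min B k) :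
    (t : ℤ) ≤ A + B + 1 + ⌊(Real.sqrt (1 + 8 * A * B) - 1) / 2⌋ := by
  have hm0 : (0:ℤ) ≤ ⌊(Real.sqrt (1 + 8 * A * B) - 1) / 2⌋ := by
    rw [Int.le_floor]
    have h1 : (1:ℝ) ≤ Real.sqrt (1 + 8 * A * B) := by
      have hnn : (0:ℝ) ≤ 8*(A:ℝ)*B := by positivity
      have h2 := Real.sq_sqrt (by linarith : (0:ℝ) ≤ 1+8*(A:ℝ)*B)
      nlinarith [Real.sqrt_nonneg ((1:ℝ)+8*(A:ℝ)*B)]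
    push_cast
    linarith
  by_cases hsmall : t ≤ A + B + 1
  · have : (t:ℤ) ≤ A + B + 1 := by exact_mod_cast hsmall
    linarith
  push_neg at hsmall
  have hAt : A ≤ t := by omega
  have hBt : B ≤ t := by omega
  have e1 := sum_min_eq A t hAt
  have e2 := sum_min_eq B t hBt
  have e3 := Finset.sum_range_id_mul_two t
  have hz : (t:ℤ)*(t-1) + (A*A + A + B*B + B) ≤ 2*A*t + 2*B*t := by
    have hh : (∑ k ∈ range t, k) * 2 + (A*A+A) + (B*B+B) ≤ 2*A*t + 2*B*t := by
      calc (∑ k ∈ range t, k) * 2 + (A*A+A) + (B*B+B)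
          ≤ ((∑ k ∈ range t, min A k) + ∑ k ∈ range t, min B k) * 2 + (A*A+A) + (B*B+B) := by
            gcongr
        _ = ((∑ k ∈ range t, min A k)*2 + A*A + A)
            + ((∑ k ∈ range t, min B k)*2 + B*B + B) := by ring
        _ = 2*A*t + 2*B*t := by rw [e1, e2]
    rw [e3] at hh
    have ht1 : 1 ≤ t := by omega
    have := (Nat.cast_le (α := ℤ)).2 hh
    push_cast [Nat.cast_sub ht1] at this ⊢
    linarith
  have hsq : ((2*(t:ℤ) - 2*A - 2*B - 1))^2 ≤ 1 + 8*A*B := by nlinarith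
  have hreal : ((2*(t:ℤ) - 2*A - 2*B - 1 : ℤ) : ℝ) ≤ Real.sqrt (1 + 8*A*B) := by
    have hnn : (0:ℝ) ≤ 1 + 8*(A:ℝ)*B := by positivity
    have h1 := Real.sq_sqrt hnn
    have h2 := Real.sqrt_nonneg (1 + 8*(A:ℝ)*B)
    have h3 : (((2*(t:ℤ) - 2*A - 2*B - 1 : ℤ) : ℝ))^2 ≤ 1 + 8*(A:ℝ)*B := by
      exact_mod_cast (by exact_mod_cast hsq :
        ((((2*(t:ℤ) - 2*A - 2*B - 1))^2 : ℤ) : ℝ) ≤ ((1 + 8*A*B : ℤ) : ℝ))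
    nlinarith
  have : ((t:ℤ) - A - B - 1) ≤ ⌊(Real.sqrt (1 + 8 * A * B) - 1) / 2⌋ := by
    rw [Int.le_floor]
    push_cast at hreal ⊢
    linarith
  linarith

set_option maxHeartbeats 2000000 in
/-- `CR^2(⋄_r, ⋄_s) ≤ 2⌊(√(1+8(r−1)(s−1))−1)/2⌋ + 3(r+s) − 1`:
for `r, s ≥ 2` and `N` equal to this value, every 2-coloring of the 2-chains of the
chain `C_N` contains an `r`-diamond in color `0` or an `s`-diamond in color `1`. -/
theorem chain_ramsey_diamonds_upper
    (r s : ℕ) (hr : 2 ≤ r) (hs : 2 ≤ s) (N : ℕ)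
    (hN : (N : ℤ) =
      2 * ⌊(Real.sqrt (1 + 8 * ((r : ℝ) - 1) * ((s : ℝ) - 1)) - 1) / 2⌋ +
        3 * ((r : ℤ) + (s : ℤ)) - 1) :
    ∀ c : Fin N → Fin N → Fin 2,
      IsDiamond c 0 r ∨ IsDiamond c 1 s := by
  intro c
  by_contra hcon
  push_neg at hcon
  obtain ⟨h0, h1⟩ := hcon
  have hr1 : 1 ≤ r := by omega
  have hs1 : 1 ≤ s := by omega
  -- the floor `m`
  set m := ⌊(Real.sqrt (1 + 8 * ((r : ℝ) - 1) * ((s : ℝ) - 1)) - 1) / 2⌋ with hmdef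
  have hcastr : ((r - 1 : ℕ) : ℝ) = (r : ℝ) - 1 := by push_cast [hr1]; ring
  have hcasts : ((s - 1 : ℕ) : ℝ) = (s : ℝ) - 1 := by push_cast [hs1]; ring
  have hm0 : (0:ℤ) ≤ m := by
    rw [hmdef, Int.le_floor]
    have h1' : (1:ℝ) ≤ Real.sqrt (1 + 8 * ((r:ℝ)-1) * ((s:ℝ)-1)) := by
      have hnn : (0:ℝ) ≤ 8*((r:ℝ)-1)*((s:ℝ)-1) := by
        have : (1:ℝ) ≤ (r:ℝ) := by exact_mod_cast hr1
        have : (1:ℝ) ≤ (s:ℝ) := by exact_mod_cast hs1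
        nlinarith
      have h2 := Real.sq_sqrt (by linarith : (0:ℝ) ≤ 1+8*((r:ℝ)-1)*((s:ℝ)-1))
      nlinarith [Real.sqrt_nonneg ((1:ℝ)+8*((r:ℝ)-1)*((s:ℝ)-1))]
    push_cast
    linarith
  have hrZ : (2:ℤ) ≤ (r:ℤ) := by exact_mod_cast hr
  have hsZ : (2:ℤ) ≤ (s:ℤ) := by exact_mod_cast hs
  have hNge : (11:ℤ) ≤ (N:ℤ) := by rw [hN]; linarith
  have hNge' : 11 ≤ N := by exact_mod_cast hNge
  set bot : Fin N := ⟨0, by omega⟩ with hbot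
  set top : Fin N := ⟨N-1, by omega⟩ with htop
  -- the four classes
  set S00 := univ.filter (fun y : Fin N => bot < y ∧ y < top ∧ c bot y = 0 ∧ c y top = 0) with hS00def
  set S01 := univ.filter (fun y : Fin N => bot < y ∧ y < top ∧ c bot y = 0 ∧ c y top = 1) with hS01def
  set S10 := univ.filter (fun y : Fin N => bot < y ∧ y < top ∧ c bot y = 1 ∧ c y top = 0) with hS10def
  set S11 := univ.filter (fun y : Fin N => bot < y ∧ y < top ∧ c bot y = 1 ∧ c y top = 1) with hS11def
  -- monochromatic classes are small
  have hcard00 : S00.card ≤ r - 1 := by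
    by_contra hcc
    push_neg at hcc
    refine h0 (diamond_of_subset c 0 r bot top S00 (by omega) ?_)
    intro y hy
    rw [hS00def, mem_filter] at hy
    exact ⟨hy.2.1, hy.2.2.1, hy.2.2.2.1, hy.2.2.2.2⟩
  have hcard11 : S11.card ≤ s - 1 := by
    by_contra hcc
    push_neg at hcc
    refine h1 (diamond_of_subset c 1 s bot top S11 (by omega) ?_)
    intro y hy
    rw [hS11def, mem_filter] at hy
    exact ⟨hy.2.1, hy.2.2.1, hy.2.2.2.1, hy.2.2.2.2⟩
  -- mixed classes
  have hcard01 : (S01.card : ℤ) ≤ (r:ℤ) - 1 + ((s:ℤ) - 1) + 1 + m := by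
    have hkey := count_key S01 (fun u v => c u v = 0) (r-1) (s-1) ?_ ?_
    · have := arith_key S01.card (r-1) (s-1) hkey
      rw [hcastr, hcasts] at this
      rw [hmdef]
      push_cast [Nat.cast_sub hr1, Nat.cast_sub hs1] at this ⊢
      linarith
    · intro z hz
      by_contra hcc
      push_neg at hcc
      refine h0 (diamond_of_subset c 0 r bot z (S01.filter (fun y => y < z ∧ c y z = 0)) (by omega) ?_)
      intro y hy
      rw [mem_filter] at hy
      obtain ⟨hyT, hyz, hcy⟩ := hy
      rw [hS01def, mem_filter] at hyT
      exact ⟨hyT.2.1, hyz, hyT.2.2.2.1, hcy⟩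
    · intro x hx
      by_contra hcc
      push_neg at hcc
      refine h1 (diamond_of_subset c 1 s x top (S01.filter (fun y => x < y ∧ ¬ c x y = 0)) (by simp only [ne_eq] at hcc; omega) ?_)
      intro y hy
      rw [mem_filter] at hy
      obtain ⟨hyT, hxy, hcy⟩ := hy
      rw [hS01def, mem_filter] at hyT
      exact ⟨hxy, hyT.2.2.1, fin2_of_ne _ hcy, hyT.2.2.2.2⟩
  have hcard10 : (S10.card : ℤ) ≤ (r:ℤ) - 1 + ((s:ℤ) - 1) + 1 + m := by
    have hkey := count_key S10 (fun u v => c u v = 1) (s-1) (r-1) ?_ ?_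
    · have := arith_key S10.card (s-1) (r-1) hkey
      rw [hcastr, hcasts] at this
      have hcomm : (1 + 8 * ((s:ℝ)-1) * ((r:ℝ)-1)) = (1 + 8 * ((r:ℝ)-1) * ((s:ℝ)-1)) := by ring
      rw [hcomm] at this
      rw [hmdef]
      push_cast [Nat.cast_sub hr1, Nat.cast_sub hs1] at this ⊢
      linarith
    · intro z hz
      by_contra hcc
      push_neg at hcc
      refine h1 (diamond_of_subset c 1 s bot z (S10.filter (fun y => y < z ∧ c y z = 1)) (by omega) ?_)
      intro y hy
      rw [mem_filter] at hy
      obtain ⟨hyT, hyz, hcy⟩ := hy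
      rw [hS10def, mem_filter] at hyT
      exact ⟨hyT.2.1, hyz, hyT.2.2.2.1, hcy⟩
    · intro x hx
      by_contra hcc
      push_neg at hcc
      refine h0 (diamond_of_subset c 0 r x top (S10.filter (fun y => x < y ∧ ¬ c x y = 1)) (by simp only [ne_eq] at hcc; omega) ?_)
      intro y hy
      rw [mem_filter] at hy
      obtain ⟨hyT, hxy, hcy⟩ := hy
      rw [hS10def, mem_filter] at hyT
      exact ⟨hxy, hyT.2.2.1, fin2_of_ne' _ hcy, hyT.2.2.2.2⟩
  -- the middle set
  set M := univ.filter (fun y : Fin N => bot < y ∧ y < top) with hMdef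
  have hMcard : M.card = N - 2 := by
    have hMeq : M = univ \ {bot, top} := by
      ext y
      simp only [hMdef, mem_filter, mem_univ, true_and, mem_sdiff, mem_insert, mem_singleton]
      constructor
      · rintro ⟨hy1, hy2⟩ h
        rcases h with rfl | rfl
        · exact lt_irrefl _ hy1
        · exact lt_irrefl _ hy2
      · intro hy
        have hy1 : y ≠ bot := fun h => hy (Or.inl h)
        have hy2 : y ≠ top := fun h => hy (Or.inr h)
        constructor
        · rw [Fin.lt_def]
          simp only [hbot]
          have : y.val ≠ 0 := fun h => hy1 (Fin.ext (by simpa [hbot] using h))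
          omega
        · rw [Fin.lt_def]
          simp only [htop]
          have hyv := y.isLt
          have : y.val ≠ N - 1 := fun h => hy2 (Fin.ext (by simpa [htop] using h))
          omega
    rw [hMeq, Finset.card_sdiff_of_subset (Finset.subset_univ _)]
    have hne : bot ≠ top := by
      rw [Fin.ne_iff_vne]
      simp only [hbot, htop]
      omega
    rw [Finset.card_insert_of_notMem (by simpa using hne), Finset.card_singleton,
      Finset.card_univ, Fintype.card_fin]
  have hMsub : M ⊆ S00 ∪ S01 ∪ S10 ∪ S11 := by
    intro y hy
    rw [hMdef, mem_filter] at hy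
    obtain ⟨_, hy1, hy2⟩ := hy
    simp only [mem_union, hS00def, hS01def, hS10def, hS11def, mem_filter, mem_univ, true_and]
    rcases fin2_cases (c bot y) with hb | hb <;> rcases fin2_cases (c y top) with ht | ht
    · exact Or.inl (Or.inl (Or.inl ⟨hy1, hy2, hb, ht⟩))
    · exact Or.inl (Or.inl (Or.inr ⟨hy1, hy2, hb, ht⟩))
    · exact Or.inl (Or.inr ⟨hy1, hy2, hb, ht⟩)
    · exact Or.inr ⟨hy1, hy2, hb, ht⟩
  have hMle : M.card ≤ S00.card + S01.card + S10.card + S11.card :=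
    calc M.card ≤ (S00 ∪ S01 ∪ S10 ∪ S11).card := Finset.card_le_card hMsub
      _ ≤ (S00 ∪ S01 ∪ S10).card + S11.card := Finset.card_union_le _ _
      _ ≤ (S00 ∪ S01).card + S10.card + S11.card := by
          have := Finset.card_union_le (S00 ∪ S01) S10
          omega
      _ ≤ S00.card + S01.card + S10.card + S11.card := by
          have := Finset.card_union_le S00 S01
          omega
  -- final contradiction
  have hMZ : ((N:ℤ) - 2) ≤ (S00.card : ℤ) + S01.card + S10.card + S11.card := by
    have : ((M.card : ℕ) : ℤ) ≤ ((S00.card + S01.card + S10.card + S11.card : ℕ) : ℤ) := by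
      exact_mod_cast hMle
    rw [hMcard] at this
    push_cast [Nat.cast_sub (by omega : 2 ≤ N)] at this
    linarith
  have h00Z : (S00.card : ℤ) ≤ (r:ℤ) - 1 := by
    have : ((S00.card : ℕ) : ℤ) ≤ ((r - 1 : ℕ) : ℤ) := by exact_mod_cast hcard00
    push_cast [Nat.cast_sub hr1] at this
    linarith
  have h11Z : (S11.card : ℤ) ≤ (s:ℤ) - 1 := by
    have : ((S11.card : ℕ) : ℤ) ≤ ((s - 1 : ℕ) : ℤ) := by exact_mod_cast hcard11
    push_cast [Nat.cast_sub hs1] at this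
    linarith
  rw [hmdef] at hm0 hcard01 hcard10 hN
  linarith
end

section
/- For integers s ≥ r ≥ 2, there exists a 2-coloring of the 2-chains of the chain C_{2s+2} that contains no s-diamond in color 1 and no r-diamond in color 2. (That is, CR^2(⋄_s, ⋄_r) > 2s + 2.) -/
/-- `CR^2(⋄_s, ⋄_r) > 2s + 2` for `s ≥ r ≥ 2`: there is a 2-coloring of
the 2-chains of the chain `C_{2s+2}` containing no `s`-diamond in color `0` and no
`r`-diamond in color `1`. -/
theorem chain_ramsey_diamonds_lower
    (r s : ℕ) (hr : 2 ≤ r) (hrs : r ≤ s) :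
    ∃ c : Fin (2 * s + 2) → Fin (2 * s + 2) → Fin 2,
      ¬ IsDiamond c 0 s ∧ ¬ IsDiamond c 1 r := by
  have hs : 2 ≤ s := le_trans hr hrs
  refine ⟨fun a b => if (a.val = 0 ∧ b.val = s) ∨ b.val + 1 ≤ a.val + s then 0 else 1, ?_, ?_⟩
  · rintro ⟨x, z, y, hinj, h⟩
    -- every y k has val in Icc (z+1-s) (x+s), and in Ioo x z
    have hmem : ∀ k : Fin s, (y k).val ∈ Finset.Icc (z.val + 1 - s) (x.val + s) := by
      intro k
      obtain ⟨hxy, hyz, hc1, hc2⟩ := h k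
      have hy0 : (y k).val ≠ 0 := by
        have : x.val < (y k).val := hxy
        omega
      have h1 : (x.val = 0 ∧ (y k).val = s) ∨ (y k).val + 1 ≤ x.val + s := by
        by_contra hP
        simp only [if_neg hP] at hc1
        exact absurd hc1 (by decide)
      have h2 : ((y k).val = 0 ∧ z.val = s) ∨ z.val + 1 ≤ (y k).val + s := by
        by_contra hP
        simp only [if_neg hP] at hc2
        exact absurd hc2 (by decide)
      simp only [Finset.mem_Icc]
      omega
    have hmem2 : ∀ k : Fin s, (y k).val ∈ Finset.Ioo x.val z.val := by
      intro k
      obtain ⟨hxy, hyz, _, _⟩ := h k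
      simp only [Finset.mem_Ioo]
      exact ⟨hxy, hyz⟩
    have hinj' : Set.InjOn (fun k : Fin s => (y k).val) (Finset.univ : Finset (Fin s)) := by
      intro a _ b _ hab
      exact hinj (Fin.val_injective hab)
    have c1 : s ≤ (Finset.Icc (z.val + 1 - s) (x.val + s)).card :=
      calc s = (Finset.univ : Finset (Fin s)).card := by simp
      _ ≤ _ := Finset.card_le_card_of_injOn _ (fun k _ => hmem k) hinj'
    have c2 : s ≤ (Finset.Ioo x.val z.val).card :=
      calc s = (Finset.univ : Finset (Fin s)).card := by simp
      _ ≤ _ := Finset.card_le_card_of_injOn _ (fun k _ => hmem2 k) hinj'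
    rw [Nat.card_Icc] at c1
    rw [Nat.card_Ioo] at c2
    omega
  · rintro ⟨x, z, y, hinj, h⟩
    have k0 : Fin r := ⟨0, by omega⟩
    have k1 : Fin r := ⟨1, by omega⟩
    have key : ∀ k : Fin r, x.val + s ≤ (y k).val ∧ (y k).val + s ≤ z.val ∧
        ¬(x.val = 0 ∧ (y k).val = s) := by
      intro k
      obtain ⟨hxy, hyz, hc1, hc2⟩ := h k
      have h1 : ¬((x.val = 0 ∧ (y k).val = s) ∨ (y k).val + 1 ≤ x.val + s) := by
        intro hP
        simp only [if_pos hP] at hc1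
        exact absurd hc1 (by decide)
      have h2 : ¬(((y k).val = 0 ∧ z.val = s) ∨ z.val + 1 ≤ (y k).val + s) := by
        intro hP
        simp only [if_pos hP] at hc2
        exact absurd hc2 (by decide)
      push_neg at h1 h2
      omega
    have hne : (y ⟨0, by omega⟩).val ≠ (y ⟨1, by omega⟩).val := by
      intro hv
      have := hinj (Fin.val_injective hv)
      simp [Fin.ext_iff] at this
    obtain ⟨a1, a2, a3⟩ := key ⟨0, by omega⟩
    obtain ⟨b1, b2, b3⟩ := key ⟨1, by omega⟩
    have hz : z.val ≤ 2 * s + 1 := by omega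
    omega
end
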